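/- Let Ω be a compact metric space (so that Dugundji's extension theorem applies), E ⊂ Ω a closed set, and J = {f ∈ C(Ω): f|E = 0}. Then (C(Ω), J) has the CQLP: every compact operator T: Z → C(Ω)/J from a Banach space Z lifts to a compact operator S: Z → C(Ω) with π∘S = T and ‖S‖ = ‖T‖. -/

import Mathlib

open Metric TopologicalSpace Set

section Dugundji

set_option linter.unusedSectionVars false

variable {Ω : Type*} [MetricSpace Ω] [CompactSpace Ω]

/-- Dugundji weight functions. -/
noncomputable def dgw (E : Set Ω) (a : ℕ → Ω) (n : ℕ) (x : Ω) : ℝ :=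
  (1/2 : ℝ)^n * max (2 * infDist x E - dist x (a n)) 0

lemma dgw_nonneg (E : Set Ω) (a : ℕ → Ω) (n : ℕ) (x : Ω) : 0 ≤ dgw E a n x :=
  mul_nonneg (by positivity) (le_max_right _ _)

lemma dgw_le (E : Set Ω) (a : ℕ → Ω) (ha : ∀ n, a n ∈ E) (n : ℕ) (x : Ω) :
    dgw E a n x ≤ (1/2 : ℝ)^n * (2 * diam (univ : Set Ω)) := by
  have h1 : infDist x E ≤ diam (univ : Set Ω) :=
    (infDist_le_dist_of_mem (ha 0)).trans
      (dist_le_diam_of_mem isCompact_univ.isBounded (mem_univ _) (mem_univ _))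
  refine mul_le_mul_of_nonneg_left (max_le ?_ ?_) (by positivity)
  · nlinarith [dist_nonneg (x := x) (y := a n)]
  · positivity

lemma dgw_continuous (E : Set Ω) (a : ℕ → Ω) (n : ℕ) : Continuous (dgw E a n) := by
  exact continuous_const.mul
    ((((continuous_infDist_pt E).const_smul (2:ℝ)).sub (continuous_dist.comp
      (continuous_id.prodMk continuous_const))).max continuous_const)

lemma dgw_summable_aux : Summable fun n : ℕ => (1/2 : ℝ)^n * (2 * diam (univ : Set Ω)) :=
  summable_geometric_two.mul_right _

lemma dgw_summable (E : Set Ω) (a : ℕ → Ω) (ha : ∀ n, a n ∈ E) (x : Ω) :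
    Summable fun n => dgw E a n x :=
  dgw_summable_aux.of_nonneg_of_le (fun n => dgw_nonneg E a n x) (fun n => dgw_le E a ha n x)

lemma dgw_pos_imp (E : Set Ω) (a : ℕ → Ω) {n : ℕ} {x : Ω} (h : dgw E a n x ≠ 0) :
    dist x (a n) < 2 * infDist x E := by
  by_contra hc
  push_neg at hc
  apply h
  simp only [dgw]
  rw [max_eq_right (by linarith)]
  ring

/-- Total weight. -/
noncomputable def dgW (E : Set Ω) (a : ℕ → Ω) (x : Ω) : ℝ := ∑' n, dgw E a n x

lemma dgW_nonneg (E : Set Ω) (a : ℕ → Ω) (x : Ω) : 0 ≤ dgW E a x :=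
  tsum_nonneg fun n => dgw_nonneg E a n x

lemma dgW_continuous (E : Set Ω) (a : ℕ → Ω) (ha : ∀ n, a n ∈ E) :
    Continuous (dgW E a) := by
  refine continuous_tsum (fun n => dgw_continuous E a n) (dgw_summable_aux (Ω := Ω)) (fun n x => ?_)
  rw [Real.norm_eq_abs, abs_of_nonneg (dgw_nonneg E a n x)]
  exact dgw_le E a ha n x

lemma dgW_pos (E : Set Ω) (hE : IsClosed E) (hne : E.Nonempty) (a : ℕ → Ω)
    (ha : ∀ n, a n ∈ E) (hd : ∀ e ∈ E, ∀ ε > 0, ∃ n, dist (a n) e < ε)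
    {x : Ω} (hx : x ∉ E) : 0 < dgW E a x := by
  have hdpos : 0 < infDist x E := (hE.notMem_iff_infDist_pos hne).1 hx
  have h1 : infDist x E < (3/2) * infDist x E := by linarith
  obtain ⟨e, heE, he⟩ := (infDist_lt_iff hne).1 h1
  obtain ⟨n, hn⟩ := hd e heE (infDist x E / 2) (by linarith)
  have hxan : dist x (a n) < 2 * infDist x E := by
    calc dist x (a n) ≤ dist x e + dist e (a n) := dist_triangle _ _ _
    _ < (3/2) * infDist x E + infDist x E / 2 := by rw [dist_comm e (a n)]; linarith
    _ = 2 * infDist x E := by ring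
  have hwn : 0 < dgw E a n x := by
    apply mul_pos (by positivity)
    rw [lt_max_iff]; left; linarith
  calc 0 < dgw E a n x := hwn
  _ ≤ dgW E a x := Summable.le_tsum (dgw_summable E a ha x) n (fun m _ => dgw_nonneg E a m x)

/-- Weighted numerator. -/
noncomputable def dgN (E : Set Ω) (a : ℕ → Ω) (f : Ω → ℝ) (x : Ω) : ℝ :=
  ∑' n, dgw E a n x * f (a n)

lemma dgN_summable (E : Set Ω) (a : ℕ → Ω) (ha : ∀ n, a n ∈ E) (f : C(Ω, ℝ)) (x : Ω) :
    Summable fun n => dgw E a n x * f (a n) := by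
  refine Summable.of_norm (Summable.of_nonneg_of_le (fun n => norm_nonneg _)
    (fun n => ?_) ((dgw_summable_aux (Ω := Ω)).mul_right ‖f‖))
  rw [Real.norm_eq_abs, abs_mul, abs_of_nonneg (dgw_nonneg E a n x)]
  exact mul_le_mul (dgw_le E a ha n x) (f.norm_coe_le_norm (a n)) (abs_nonneg _)
    (by positivity)

lemma dgN_continuous (E : Set Ω) (a : ℕ → Ω) (ha : ∀ n, a n ∈ E) (f : C(Ω, ℝ)) :
    Continuous (dgN E a f) := by
  refine continuous_tsum (fun n => (dgw_continuous E a n).mul (f.continuous.comp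
    continuous_const)) ((dgw_summable_aux (Ω := Ω)).mul_right ‖f‖) (fun n x => ?_)
  rw [Real.norm_eq_abs, abs_mul, abs_of_nonneg (dgw_nonneg E a n x)]
  exact mul_le_mul (dgw_le E a ha n x) (f.norm_coe_le_norm (a n)) (abs_nonneg _)
    (by positivity)

open scoped Classical in
/-- The Dugundji extension of `f`. -/
noncomputable def dgE (E : Set Ω) (a : ℕ → Ω) (f : Ω → ℝ) (x : Ω) : ℝ :=
  if x ∈ E then f x else dgN E a f x / dgW E a x

lemma dgE_of_mem (E : Set Ω) (a : ℕ → Ω) (f : Ω → ℝ) {x : Ω} (hx : x ∈ E) :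
    dgE E a f x = f x := by simp [dgE, hx]

lemma dgE_of_not_mem (E : Set Ω) (a : ℕ → Ω) (f : Ω → ℝ) {x : Ω} (hx : x ∉ E) :
    dgE E a f x = dgN E a f x / dgW E a x := by simp [dgE, hx]

/-- If all relevant values of `f` on a set containing the `a n` with positive weight are
within `ε` of `c`, then the weighted average is within `ε` of `c`. -/
lemma dgE_est (E : Set Ω) (hE : IsClosed E) (hne : E.Nonempty) (a : ℕ → Ω)
    (ha : ∀ n, a n ∈ E) (hd : ∀ e ∈ E, ∀ ε > 0, ∃ n, dist (a n) e < ε)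
    (f : C(Ω, ℝ)) {x : Ω} (hx : x ∉ E) {c ε : ℝ} (hε : 0 ≤ ε)
    (hf : ∀ n, dist x (a n) < 2 * infDist x E → |f (a n) - c| ≤ ε) :
    |dgE E a f x - c| ≤ ε := by
  have hW := dgW_pos E hE hne a ha hd hx
  rw [dgE_of_not_mem E a f hx]
  have hkey : dgN E a f x / dgW E a x - c = (dgN E a f x - c * dgW E a x) / dgW E a x := by
    field_simp
  rw [hkey, abs_div, abs_of_pos hW, div_le_iff₀ hW]
  have hsum1 := dgN_summable E a ha f x
  have hsumW := dgw_summable E a ha x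
  have heq : dgN E a f x - c * dgW E a x = ∑' n, dgw E a n x * (f (a n) - c) := by
    have : (fun n => dgw E a n x * (f (a n) - c))
        = fun n => dgw E a n x * f (a n) - dgw E a n x * c := by
      funext n; ring
    rw [this, Summable.tsum_sub hsum1 (hsumW.mul_right c), tsum_mul_right]
    rw [dgN, dgW]; ring
  rw [heq]
  have hterm : ∀ n, ‖dgw E a n x * (f (a n) - c)‖ ≤ dgw E a n x * ε := by
    intro n
    rcases eq_or_ne (dgw E a n x) 0 with h0 | h0
    · simp [h0]
    · rw [Real.norm_eq_abs, abs_mul, abs_of_nonneg (dgw_nonneg E a n x)]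
      exact mul_le_mul_of_nonneg_left (hf n (dgw_pos_imp E a h0)) (dgw_nonneg E a n x)
  have hsumn : Summable fun n => ‖dgw E a n x * (f (a n) - c)‖ :=
    (hsumW.mul_right ε).of_nonneg_of_le (fun n => norm_nonneg _) hterm
  calc |∑' n, dgw E a n x * (f (a n) - c)| ≤ ∑' n, ‖dgw E a n x * (f (a n) - c)‖ := by
        rw [← Real.norm_eq_abs]; exact norm_tsum_le_tsum_norm hsumn
  _ ≤ ∑' n, dgw E a n x * ε := Summable.tsum_le_tsum hterm hsumn (hsumW.mul_right ε)
  _ = ε * dgW E a x := by rw [tsum_mul_right, dgW]; ring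

lemma dgE_continuous (E : Set Ω) (hE : IsClosed E) (hne : E.Nonempty) (a : ℕ → Ω)
    (ha : ∀ n, a n ∈ E) (hd : ∀ e ∈ E, ∀ ε > 0, ∃ n, dist (a n) e < ε)
    (f : C(Ω, ℝ)) : Continuous (dgE E a f) := by
  rw [continuous_iff_continuousAt]
  intro x₀
  by_cases hx₀ : x₀ ∈ E
  · rw [Metric.continuousAt_iff]
    intro ε hε
    obtain ⟨δ₁, hδ₁, hδ₁'⟩ := Metric.continuousAt_iff.1 (f.continuous.continuousAt (x := x₀))
      (ε/2) (by linarith)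
    refine ⟨δ₁/3, by linarith, fun {x} hx => ?_⟩
    rw [Real.dist_eq, dgE_of_mem E a f hx₀]
    by_cases hxE : x ∈ E
    · rw [dgE_of_mem E a f hxE]
      have := hδ₁' (x := x) (by linarith [hx])
      rw [Real.dist_eq] at this
      linarith
    · have hest : |dgE E a f x - f x₀| ≤ ε/2 := by
        refine dgE_est E hE hne a ha hd f hxE (by linarith) (fun n hn => ?_)
        have hinf : infDist x E ≤ dist x x₀ := infDist_le_dist_of_mem hx₀
        have hanx : dist (a n) x₀ < δ₁ := by
          calc dist (a n) x₀ ≤ dist (a n) x + dist x x₀ := dist_triangle _ _ _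
          _ < 2 * infDist x E + dist x x₀ := by rw [dist_comm (a n) x]; linarith
          _ ≤ 3 * dist x x₀ := by linarith
          _ < δ₁ := by linarith [hx]
        have := hδ₁' (x := a n) hanx
        rw [Real.dist_eq] at this
        linarith
      linarith [abs_nonneg (dgE E a f x - f x₀)]
  · have hW := (dgW_pos E hE hne a ha hd hx₀).ne'
    have hc : ContinuousAt (fun x => dgN E a f x / dgW E a x) x₀ :=
      ((dgN_continuous E a ha f).continuousAt).div ((dgW_continuous E a ha).continuousAt) hW
    refine hc.congr ?_
    filter_upwards [hE.isOpen_compl.mem_nhds hx₀] with x hx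
    exact (dgE_of_not_mem E a f hx).symm

/-- Existence of a norm-one linear extension operator (Dugundji). -/
theorem exists_dugundji (E : Set Ω) (hE : IsClosed E) (hne : E.Nonempty) :
    ∃ L : C(Ω, ℝ) →ₗ[ℝ] C(Ω, ℝ),
      (∀ f : C(Ω, ℝ), ∀ x ∈ E, L f x = f x) ∧
      (∀ (f : C(Ω, ℝ)) (M : ℝ), 0 ≤ M → (∀ y ∈ E, |f y| ≤ M) → ‖L f‖ ≤ M) := by
  haveI : Nonempty ↥E := hne.to_subtype
  set a : ℕ → Ω := fun n => (denseSeq ↥E n : Ω) with ha_def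
  have ha : ∀ n, a n ∈ E := fun n => (denseSeq ↥E n).2
  have hd : ∀ e ∈ E, ∀ ε > 0, ∃ n, dist (a n) e < ε := by
    intro e he ε hε
    obtain ⟨n, hn⟩ := Metric.denseRange_iff.1 (denseRange_denseSeq ↥E) ⟨e, he⟩ ε hε
    exact ⟨n, by simpa [Subtype.dist_eq, dist_comm] using hn⟩
  refine ⟨{ toFun := fun f => ⟨dgE E a f, dgE_continuous E hE hne a ha hd f⟩
            map_add' := ?_
            map_smul' := ?_ }, ?_, ?_⟩
  · intro f g
    ext x
    simp only [ContinuousMap.coe_mk, ContinuousMap.coe_add, Pi.add_apply]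
    by_cases hx : x ∈ E
    · simp [dgE_of_mem E a _ hx, dgE_of_mem E a (f : Ω → ℝ) hx,
        dgE_of_mem E a (g : Ω → ℝ) hx]
    · rw [dgE_of_not_mem E a _ hx, dgE_of_not_mem E a (f : Ω → ℝ) hx,
        dgE_of_not_mem E a (g : Ω → ℝ) hx]
      have : dgN E a (⇑f + ⇑g) x = dgN E a f x + dgN E a g x := by
        rw [dgN, dgN, dgN, ← Summable.tsum_add (dgN_summable E a ha f x) (dgN_summable E a ha g x)]
        congr 1; funext n; simp; ring
      rw [this, add_div]
  · intro c f
    ext x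
    simp only [ContinuousMap.coe_mk, RingHom.id_apply, ContinuousMap.coe_smul, Pi.smul_apply,
      smul_eq_mul]
    by_cases hx : x ∈ E
    · simp [dgE_of_mem E a _ hx, dgE_of_mem E a (f : Ω → ℝ) hx]
    · rw [dgE_of_not_mem E a _ hx, dgE_of_not_mem E a (f : Ω → ℝ) hx]
      have : dgN E a (c • ⇑f) x = c * dgN E a f x := by
        rw [dgN, dgN, ← tsum_mul_left]
        congr 1; funext n; simp; ring
      rw [this, mul_div_assoc]
  · intro f x hx
    exact dgE_of_mem E a (f : Ω → ℝ) hx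
  · intro f M hM hfM
    rw [ContinuousMap.norm_le _ hM]
    intro x
    simp only [LinearMap.coe_mk, AddHom.coe_mk, ContinuousMap.coe_mk, Real.norm_eq_abs]
    by_cases hx : x ∈ E
    · rw [dgE_of_mem E a (f : Ω → ℝ) hx]
      exact hfM x hx
    · have := dgE_est E hE hne a ha hd f hx (c := 0) hM (fun n _ => by
        simpa using hfM (a n) (ha n))
      simpa using this

end Dugundji

/-- The subspace of continuous functions vanishing on a set `E`. -/
def vanishingIdeal (Ω : Type*) [TopologicalSpace Ω] (E : Set Ω) :
    Submodule ℝ C(Ω, ℝ) where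
  carrier := {f | ∀ x ∈ E, f x = 0}
  add_mem' := by intro f g hf hg x hx; simp [hf x hx, hg x hx]
  zero_mem' := by intro x hx; simp
  smul_mem' := by intro c f hf x hx; simp [hf x hx]

/-- The pair (X,J) has the compact quotient lifting property (CQLP): every compact operator
from a Banach space into X/J lifts to a compact operator into X with the same norm. -/
def HasCQLP (X : Type*) [NormedAddCommGroup X] [NormedSpace ℝ X] (J : Submodule ℝ X) : Prop :=
  ∀ (Z : Type) [NormedAddCommGroup Z] [NormedSpace ℝ Z] [CompleteSpace Z]
    (T : Z →L[ℝ] X ⧸ J), IsCompactOperator T → ∃ S : Z →L[ℝ] X, IsCompactOperator S ∧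
      (∀ z : Z, (Submodule.Quotient.mk (S z) : X ⧸ J) = T z) ∧ ‖S‖ = ‖T‖

/-- Let Ω be a compact metric space, E ⊆ Ω a closed set, and
J = {f ∈ C(Ω) : f|E = 0}.  Then (C(Ω), J) has the CQLP. -/
theorem stmt_4 (Ω : Type*) [MetricSpace Ω] [CompactSpace Ω] (E : Set Ω) (hE : IsClosed E) :
    HasCQLP C(Ω, ℝ) (vanishingIdeal Ω E) := by
  intro Z _ _ _ T hT
  rcases E.eq_empty_or_nonempty with rfl | hne
  · -- trivial case: the quotient is trivial
    have hTz : ∀ z, T z = 0 := by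
      intro z
      obtain ⟨m, hm⟩ := Submodule.Quotient.mk_surjective _ (T z)
      rw [← hm, Submodule.Quotient.mk_eq_zero]
      intro x hx
      exact absurd hx (Set.notMem_empty x)
    have hT0 : T = 0 := by ext z; exact hTz z
    refine ⟨0, ?_, fun z => ?_, ?_⟩
    · have : (⇑(0 : Z →L[ℝ] C(Ω, ℝ))) = fun _ => (0 : C(Ω, ℝ)) := by
        funext z; simp
      rw [this]
      exact isCompactOperator_zero
    · simp [hTz z]
    · rw [hT0, ContinuousLinearMap.opNorm_zero, ContinuousLinearMap.opNorm_zero]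
  · obtain ⟨L, hLext, hLnorm⟩ := exists_dugundji E hE hne
    -- L kills J
    have hker : vanishingIdeal Ω E ≤ LinearMap.ker L := by
      intro f hf
      rw [LinearMap.mem_ker]
      have h1 : ∀ y ∈ E, |f y| ≤ 0 := fun y hy => by rw [hf y hy]; simp
      have := hLnorm f 0 le_rfl h1
      have h2 : ‖L f‖ = 0 := le_antisymm this (norm_nonneg _)
      exact norm_eq_zero.1 h2
    set u₀ : (C(Ω, ℝ) ⧸ vanishingIdeal Ω E) →ₗ[ℝ] C(Ω, ℝ) := (vanishingIdeal Ω E).liftQ L hker with hu₀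
    have hu₀mk : ∀ f : C(Ω, ℝ), u₀ (Submodule.Quotient.mk f) = L f := fun f => rfl
    have hubound : ∀ q : C(Ω, ℝ) ⧸ vanishingIdeal Ω E, ‖u₀ q‖ ≤ ‖q‖ := by
      intro q
      refine le_of_forall_pos_le_add (fun ε hε => ?_)
      obtain ⟨m, hm, hmlt⟩ := Submodule.Quotient.norm_mk_lt q hε
      have h1 : ‖L m‖ ≤ ‖m‖ :=
        hLnorm m ‖m‖ (norm_nonneg m) (fun y _ => m.norm_coe_le_norm y)
      calc ‖u₀ q‖ = ‖L m‖ := by rw [← hm, hu₀mk]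
      _ ≤ ‖m‖ := h1
      _ ≤ ‖q‖ + ε := hmlt.le
    set u : (C(Ω, ℝ) ⧸ vanishingIdeal Ω E) →L[ℝ] C(Ω, ℝ) :=
      u₀.mkContinuous 1 (fun q => le_trans (hubound q) (by rw [one_mul])) with hu
    have humk : ∀ q, u q = u₀ q := fun q => rfl
    refine ⟨u.comp T, ?_, fun z => ?_, ?_⟩
    · have : ⇑(u.comp T) = ⇑u ∘ ⇑T := by rfl
      rw [this]
      exact hT.continuous_comp u.continuous
    · obtain ⟨m, hm⟩ := Submodule.Quotient.mk_surjective _ (T z)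
      rw [ContinuousLinearMap.comp_apply, ← hm, humk, hu₀mk]
      rw [Submodule.Quotient.eq]
      intro x hx
      simp only [ContinuousMap.coe_sub, Pi.sub_apply]
      rw [hLext m x hx, sub_self]
    · refine le_antisymm ?_ ?_
      · refine ContinuousLinearMap.opNorm_le_bound _ (norm_nonneg T) (fun z => ?_)
        calc ‖(u.comp T) z‖ = ‖u₀ (T z)‖ := rfl
        _ ≤ ‖T z‖ := hubound _
        _ ≤ ‖T‖ * ‖z‖ := T.le_opNorm z
      · refine ContinuousLinearMap.opNorm_le_bound _ (norm_nonneg _) (fun z => ?_)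
        obtain ⟨m, hm⟩ := Submodule.Quotient.mk_surjective _ (T z)
        have hmk : (Submodule.Quotient.mk ((u.comp T) z) : C(Ω, ℝ) ⧸ vanishingIdeal Ω E) = T z := by
          rw [ContinuousLinearMap.comp_apply, ← hm, humk, hu₀mk, Submodule.Quotient.eq]
          intro x hx
          simp only [ContinuousMap.coe_sub, Pi.sub_apply]
          rw [hLext m x hx, sub_self]
        calc ‖T z‖ = ‖(Submodule.Quotient.mk ((u.comp T) z) : C(Ω, ℝ) ⧸ vanishingIdeal Ω E)‖ := by rw [hmk]
        _ ≤ ‖(u.comp T) z‖ := Submodule.Quotient.norm_mk_le _ _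
        _ ≤ ‖u.comp T‖ * ‖z‖ := (u.comp T).le_opNorm z
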